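/- The translation ρ of Q̃ sending (a, n) to (a, n + r_Q) is a quiver automorphism of Q̃, and the map π : Q̃ → Q sending (a, n) to a is a Galois covering of quivers with respect to the group generated by ρ: π is surjective on vertices, π∘g = π for all g in the group, any two vertices with the same image are in the same orbit, and π induces bijections on the sets of arrows starting (respectively ending) at each vertex. -/

import Mathlib

universe u v

/-- A walk in a quiver: a sequence of forward or backward traversals of arrows. -/
inductive QWalk {V : Type u} [Quiver.{v} V] : V → V → Type (max u v) where
  | nil {a : V} : QWalk a a
  | fwd {a b c : V} (w : QWalk a b) (e : b ⟶ c) : QWalk a c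
  | bwd {a b c : V} (w : QWalk a b) (e : c ⟶ b) : QWalk a c

namespace QWalk

/-- The degree of a walk: forward arrows count +1, backward arrows count -1. -/
def degree {V : Type u} [Quiver.{v} V] : {a b : V} → QWalk a b → ℤ
  | _, _, nil => 0
  | _, _, fwd w _ => degree w + 1
  | _, _, bwd w _ => degree w - 1

end QWalk

/-- A quiver is gradable if any two walks between the same pair of vertices
have the same degree. -/
def QuiverGradable (V : Type u) [Quiver.{v} V] : Prop :=
  ∀ ⦃a b : V⦄ (w w' : QWalk a b), w.degree = w'.degree

/-- A quiver is locally finite if there are only finitely many arrows between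
any two vertices and each vertex has finitely many neighbours. -/
def LocallyFiniteQuiver (V : Type u) [Quiver.{v} V] : Prop :=
  (∀ a b : V, Finite (a ⟶ b)) ∧
    ∀ a : V, {b : V | Nonempty (a ⟶ b) ∨ Nonempty (b ⟶ a)}.Finite
/-- The quiver `Q^ℤ`: vertices are pairs `(a, i)` with `a` a vertex of `Q` and `i : ℤ`;
arrows `(α, i) : (a, i) → (b, i + 1)` for each arrow `α : a → b` of `Q`. -/
def ZQuiver (V : Type u) [Quiver.{v} V] : Quiver.{max v 0} (V × ℤ) :=
  ⟨fun x y => (x.1 ⟶ y.1) × PLift (y.2 = x.2 + 1)⟩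
/-- Two vertices of `Q^ℤ` lie in the same connected component iff there is a walk
between them. -/
def ZConn (V : Type u) [Quiver.{v} V] (x y : V × ℤ) : Prop :=
  Nonempty (@QWalk (V × ℤ) (ZQuiver V) x y)

/-- `r` is the grading period of the quiver `Q`: it is `0` if `Q` is gradable, and
otherwise it is the minimal positive degree of a closed walk in `Q`. -/
def IsGradingPeriod (V : Type u) [Quiver.{v} V] (r : ℤ) : Prop :=
  (QuiverGradable V ∧ r = 0) ∨
    (¬ QuiverGradable V ∧ 0 < r ∧ (∃ (a : V) (w : QWalk a a), w.degree = r) ∧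
      ∀ (a : V) (w : QWalk a a), 0 < w.degree → r ≤ w.degree)

/-- The connected component `Q̃` of `Q^ℤ` containing a chosen base vertex. -/
abbrev ZComp (V : Type u) [Quiver.{v} V] (base : V × ℤ) : Type u :=
  {z : V × ℤ // ZConn V base z}

/-- The induced quiver structure on the connected component `Q̃`. -/
instance ZCompQuiver (V : Type u) [Quiver.{v} V] (base : V × ℤ) :
    Quiver (ZComp V base) :=
  ⟨fun x y => @Quiver.Hom _ (ZQuiver V) x.1 y.1⟩


namespace QWalk

variable {V : Type u} [Quiver.{v} V]

def comp : {a b c : V} → QWalk a b → QWalk b c → QWalk a c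
  | _, _, _, w, nil => w
  | _, _, _, w, fwd v e => fwd (comp w v) e
  | _, _, _, w, bwd v e => bwd (comp w v) e

lemma degree_comp : ∀ {a b c : V} (w : QWalk a b) (v : QWalk b c),
    (comp w v).degree = w.degree + v.degree
  | _, _, _, w, nil => by simp [comp, degree]
  | _, _, _, w, fwd v e => by simp only [comp, degree, degree_comp w v]; ring
  | _, _, _, w, bwd v e => by simp only [comp, degree, degree_comp w v]; ring

def reverse : {a b : V} → QWalk a b → QWalk b a
  | _, _, nil => nil
  | _, _, fwd w e => comp (bwd nil e) (reverse w)
  | _, _, bwd w e => comp (fwd nil e) (reverse w)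

lemma degree_reverse : ∀ {a b : V} (w : QWalk a b), w.reverse.degree = -w.degree
  | _, _, nil => by simp [reverse, degree]
  | _, _, fwd w e => by
      simp only [reverse, degree, degree_comp, degree_reverse w]; ring
  | _, _, bwd w e => by
      simp only [reverse, degree, degree_comp, degree_reverse w]; ring

end QWalk

section Aux

variable {V : Type u} [Quiver.{v} V]

attribute [local instance] ZQuiver

/-- Lift a walk of `Q` to `Q^ℤ` starting at any level. -/
lemma lift_walk : ∀ {a b : V} (w : QWalk a b) (i j : ℤ), j = i + w.degree →
    Nonempty (@QWalk (V × ℤ) (ZQuiver V) (a, i) (b, j))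
  | _, _, .nil, i, j, h => by
      have : j = i := by simpa [QWalk.degree] using h
      subst this; exact ⟨.nil⟩
  | _, _, .fwd w e, i, j, h => by
      simp only [QWalk.degree] at h
      obtain ⟨u⟩ := lift_walk w i (i + w.degree) rfl
      exact ⟨u.fwd ⟨e, ⟨by omega⟩⟩⟩
  | _, _, .bwd w e, i, j, h => by
      simp only [QWalk.degree] at h
      obtain ⟨u⟩ := lift_walk w i (i + w.degree) rfl
      exact ⟨u.bwd (c := (_, j)) ⟨e, ⟨by omega⟩⟩⟩

/-- Project a walk of `Q^ℤ` to a walk of `Q`; its degree is the level difference. -/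
lemma proj_walk : ∀ {x y : V × ℤ} (_ : @QWalk (V × ℤ) (ZQuiver V) x y),
    ∃ w : QWalk x.1 y.1, w.degree = y.2 - x.2
  | _, _, .nil => ⟨.nil, by simp [QWalk.degree]⟩
  | _, _, .fwd u e => by
      obtain ⟨w, hw⟩ := proj_walk u
      exact ⟨w.fwd e.1, by have := e.2.down; simp only [QWalk.degree]; omega⟩
  | _, _, .bwd u e => by
      obtain ⟨w, hw⟩ := proj_walk u
      exact ⟨w.bwd e.1, by have := e.2.down; simp only [QWalk.degree]; omega⟩

lemma zconn_symm {x y : V × ℤ} (h : ZConn V x y) : ZConn V y x :=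
  h.elim fun w => ⟨w.reverse⟩

lemma zconn_trans {x y z : V × ℤ} (h : ZConn V x y) (h' : ZConn V y z) : ZConn V x z :=
  h.elim fun w => h'.elim fun w' => ⟨w.comp w'⟩

variable (hconn : ∀ a b : V, Nonempty (QWalk a b)) {r : ℤ} (hr : IsGradingPeriod V r)
include hconn hr

/-- Every vertex carries a closed walk of degree `r`. -/
lemma exists_closed_r (a : V) : ∃ w : QWalk a a, w.degree = r := by
  rcases hr with ⟨_, rfl⟩ | ⟨_, _, ⟨c, w, hw⟩, _⟩
  · exact ⟨.nil, by simp [QWalk.degree]⟩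
  · obtain ⟨u⟩ := hconn a c
    exact ⟨(u.comp w).comp u.reverse, by
      simp [QWalk.degree_comp, QWalk.degree_reverse, hw]⟩

/-- Closed walks of degree `k * r` for every `k : ℤ`. -/
lemma exists_closed_mul (a : V) (k : ℤ) : ∃ w : QWalk a a, w.degree = k * r := by
  obtain ⟨w0, hw0⟩ := exists_closed_r hconn hr a
  have hn : ∀ n : ℕ, ∃ w : QWalk a a, w.degree = n * r := by
    intro n
    induction n with
    | zero => exact ⟨.nil, by simp [QWalk.degree]⟩
    | succ n ih =>
        obtain ⟨w, hw⟩ := ih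
        exact ⟨w.comp w0, by rw [QWalk.degree_comp, hw, hw0]; push_cast; ring⟩
  rcases le_or_gt 0 k with hk | hk
  · obtain ⟨w, hw⟩ := hn k.toNat
    exact ⟨w, by rw [hw, Int.toNat_of_nonneg hk]⟩
  · obtain ⟨w, hw⟩ := hn (-k).toNat
    refine ⟨w.reverse, ?_⟩
    rw [QWalk.degree_reverse, hw, Int.toNat_of_nonneg (by omega)]
    ring

/-- The degree of any closed walk is a multiple of `r`. -/
lemma r_dvd_closed (a : V) (w : QWalk a a) : r ∣ w.degree := by
  have hr0 := hr
  rcases hr0 with ⟨hgr, rfl⟩ | ⟨_, hpos, _, hmin⟩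
  · have : w.degree = QWalk.degree (.nil : QWalk a a) := hgr w .nil
    simp [this, QWalk.degree]
  · obtain ⟨w', hw'⟩ := exists_closed_mul hconn hr a (-(w.degree / r))
    set s := w.degree % r with hs
    have hds : (w.comp w').degree = s := by
      rw [QWalk.degree_comp, hw', hs]
      rw [Int.emod_def]; ring
    have h0 : 0 ≤ s := Int.emod_nonneg _ (by omega)
    have h1 : s < r := Int.emod_lt_of_pos _ hpos
    have : s = 0 := by
      by_contra hne
      have := hmin a (w.comp w') (by omega)
      omega
    exact Int.dvd_of_emod_eq_zero this

omit hconn hr in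
lemma shift_walk (t : ℤ) : ∀ {x y : V × ℤ} (_ : @QWalk (V × ℤ) (ZQuiver V) x y),
    Nonempty (@QWalk (V × ℤ) (ZQuiver V) (x.1, x.2 + t) (y.1, y.2 + t))
  | _, _, .nil => ⟨.nil⟩
  | _, _, .fwd u e => by
      obtain ⟨u'⟩ := shift_walk t u
      exact ⟨u'.fwd ⟨e.1, ⟨by have := e.2.down; simp; omega⟩⟩⟩
  | _, _, .bwd u e => by
      obtain ⟨u'⟩ := shift_walk t u
      exact ⟨u'.bwd ⟨e.1, ⟨by have := e.2.down; simp; omega⟩⟩⟩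

lemma zconn_shift_r (x : V × ℤ) : ZConn V x (x.1, x.2 + r) := by
  obtain ⟨w, hw⟩ := exists_closed_r hconn hr x.1
  exact lift_walk w x.2 (x.2 + r) (by omega)

end Aux

section Main

variable {V : Type u} [Quiver.{v} V]
  (hconn : ∀ a b : V, Nonempty (QWalk a b)) {r : ℤ} (hr : IsGradingPeriod V r)
  (base : V × ℤ)

/-- The translation `ρ : (a, n) ↦ (a, n + r)` as a permutation of `Q̃`. -/
def rhoPerm : Equiv.Perm (ZComp V base) where
  toFun z := ⟨(z.1.1, z.1.2 + r), zconn_trans z.2 (zconn_shift_r hconn hr z.1)⟩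
  invFun z := ⟨(z.1.1, z.1.2 - r), by
    have h := zconn_shift_r hconn hr (z.1.1, z.1.2 - r)
    have e : z.1.2 - r + r = z.1.2 := by ring
    rw [e] at h
    exact zconn_trans z.2 (zconn_symm h)⟩
  left_inv z := by apply Subtype.ext; obtain ⟨⟨a, n⟩, hz⟩ := z; simp
  right_inv z := by apply Subtype.ext; obtain ⟨⟨a, n⟩, hz⟩ := z; simp

lemma rhoPerm_pow (n : ℤ) : ∀ z : ZComp V base,
    (((rhoPerm hconn hr base) ^ n) z).1 = (z.1.1, z.1.2 + n * r) := by
  induction n using Int.induction_on with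
  | zero => intro z; simp
  | succ n ih =>
      intro z
      rw [zpow_add_one, Equiv.Perm.mul_apply, ih]
      simp [rhoPerm, Prod.ext_iff]; ring
  | pred n ih =>
      intro z
      rw [zpow_sub_one, Equiv.Perm.mul_apply, ih]
      simp [rhoPerm, Equiv.Perm.inv_def, Equiv.coe_fn_symm_mk, Prod.ext_iff]; ring

end Main

section Thm

attribute [local instance] ZQuiver

/-- The translation `ρ : (a, n) ↦ (a, n + r_Q)` is a quiver automorphism
of `Q̃`, and `π : Q̃ → Q, (a, n) ↦ a` is a Galois covering with respect to the group
generated by `ρ`: `π` is surjective on vertices, `π ∘ g = π` for all `g` in the group,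
two vertices with the same image lie in the same orbit, and `π` induces bijections on
the sets of arrows starting (resp. ending) at each vertex. -/
theorem translation_and_galois_covering (V : Type u) [Quiver.{v} V]
    (hconn : ∀ a b : V, Nonempty (QWalk a b)) (hlf : LocallyFiniteQuiver V)
    {r : ℤ} (hr : IsGradingPeriod V r) (base : V × ℤ) :
    ∃ ρ : Equiv.Perm (ZComp V base),
      -- ρ is the translation (a, n) ↦ (a, n + r_Q)
      (∀ z : ZComp V base, ((ρ z).1 : V × ℤ) = (z.1.1, z.1.2 + r)) ∧
      -- ρ is a quiver automorphism: it induces bijections on arrow sets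
      (∀ x y : ZComp V base, Nonempty ((x ⟶ y) ≃ (ρ x ⟶ ρ y))) ∧
      -- π is surjective on vertices
      (∀ v : V, ∃ z : ZComp V base, z.1.1 = v) ∧
      -- π ∘ g = π for every g = ρ^n in the group generated by ρ
      (∀ (n : ℤ) (z : ZComp V base), (((ρ ^ n : Equiv.Perm (ZComp V base)) z).1).1 = z.1.1) ∧
      -- vertices with the same image under π lie in the same ⟨ρ⟩-orbit
      (∀ x y : ZComp V base, x.1.1 = y.1.1 →
        ∃ n : ℤ, (ρ ^ n : Equiv.Perm (ZComp V base)) x = y) ∧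
      -- π induces a bijection on the arrows starting at each vertex
      (∀ x : ZComp V base, Function.Bijective
        (fun e : Σ y : ZComp V base, (x ⟶ y) =>
          (⟨e.1.1.1, e.2.1⟩ : Σ w : V, (x.1.1 ⟶ w)))) ∧
      -- π induces a bijection on the arrows ending at each vertex
      (∀ x : ZComp V base, Function.Bijective
        (fun e : Σ y : ZComp V base, (y ⟶ x) =>
          (⟨e.1.1.1, e.2.1⟩ : Σ w : V, (w ⟶ x.1.1)))) := by
  refine ⟨rhoPerm hconn hr base, fun z => rfl, ?_, ?_, ?_, ?_, ?_, ?_⟩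
  · -- arrow equiv for ρ
    intro x y
    exact ⟨⟨fun p => ⟨p.1, ⟨by have := p.2.down; dsimp [rhoPerm]; omega⟩⟩,
      fun p => ⟨p.1, ⟨by have := p.2.down; dsimp [rhoPerm] at this; omega⟩⟩,
      fun p => rfl, fun p => rfl⟩⟩
  · -- surjectivity of π
    intro v
    obtain ⟨u⟩ := hconn base.1 v
    obtain ⟨w⟩ := lift_walk u base.2 (base.2 + u.degree) rfl
    exact ⟨⟨(v, base.2 + u.degree), ⟨w⟩⟩, rfl⟩
  · -- π ∘ ρ^n = π
    intro n z
    rw [rhoPerm_pow hconn hr base n z]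
  · -- orbits
    intro x y h
    obtain ⟨⟨a, nx⟩, hx⟩ := x
    obtain ⟨⟨b, ny⟩, hy⟩ := y
    dsimp at h
    subst h
    obtain ⟨wz⟩ := zconn_trans (zconn_symm hx) hy
    obtain ⟨w, hw⟩ := proj_walk wz
    obtain ⟨k, hk⟩ := r_dvd_closed hconn hr a w
    refine ⟨k, Subtype.ext ?_⟩
    rw [rhoPerm_pow hconn hr base k]
    dsimp at hw ⊢
    rw [Prod.ext_iff]
    refine ⟨rfl, ?_⟩
    dsimp
    rw [mul_comm k r]
    linarith
  · -- bijection on arrows out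
    intro x
    apply Function.bijective_iff_has_inverse.mpr
    refine ⟨fun p => ⟨⟨(p.1, x.1.2 + 1),
      zconn_trans x.2 ⟨.fwd .nil ⟨p.2, ⟨rfl⟩⟩⟩⟩, ⟨p.2, ⟨rfl⟩⟩⟩, ?_, ?_⟩
    · intro e
      obtain ⟨⟨⟨b, m⟩, hc⟩, e⟩ := e
      have hm : m = (x.1).2 + 1 := e.2.down
      subst hm
      rfl
    · intro p
      rfl
  · -- bijection on arrows in
    intro x
    apply Function.bijective_iff_has_inverse.mpr
    refine ⟨fun p => ⟨⟨(p.1, x.1.2 - 1),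
      zconn_trans x.2 ⟨.bwd .nil ⟨p.2, ⟨show (x.1).2 = (x.1).2 - 1 + 1 by omega⟩⟩⟩⟩,
      ⟨p.2, ⟨show (x.1).2 = (x.1).2 - 1 + 1 by omega⟩⟩⟩, ?_, ?_⟩
    · intro e
      obtain ⟨⟨⟨b, m⟩, hc⟩, e⟩ := e
      have hm0 : (x.1).2 = m + 1 := e.2.down
      have hm : m = (x.1).2 - 1 := by omega
      subst hm
      rfl
    · intro p
      rfl


end Thm
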